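/- Let k be a field, Ψ a finite-dimensional k-vector space, and for i = 1,…,n let u_i : Ψ → Φ_i and v_i : Φ_i → Ψ be linear maps. Set T_i := 1 - v_i u_i, 𝕋_i := 1 - u_i v_i. Define S_β as the block upper-triangular matrix with identity blocks on the diagonal and (i,j) block u_i v_j for i < j; define S_{-β} as the block lower-triangular matrix with diagonal blocks 𝕋_i and (i,j) block -u_i v_j for i > j. Define U_i := u_i T_{i+1} T_{i+2} ⋯ T_n : Ψ → Φ_i and V_i := v_i : Φ_i → Ψ, and let U_Σ : Ψ → ⊕_i Φ_i and V_Σ : ⊕_i Φ_i → Ψ be the induced maps. Then S_β^{-1} · S_{-β} = 1 - U_Σ V_Σ as endomorphisms of ⊕_{i=1}^n Φ_i. -/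

import Mathlib

open scoped BigOperators

variable {k : Type*} [Field k] {n : ℕ} {Ψ : Type*}
  [AddCommGroup Ψ] [Module k Ψ] [FiniteDimensional k Ψ]
  {Φ : Fin n → Type*} [∀ i, AddCommGroup (Φ i)] [∀ i, Module k (Φ i)]
  [∀ i, FiniteDimensional k (Φ i)]

/-- The ordered product (composition) of the endomorphisms `T l` for `l` running through the
finite set `s` in increasing order: for `s = {a₁ < a₂ < ⋯ < a_r}` this is `T a₁ ∘ T a₂ ∘ ⋯ ∘ T a_r`
(the identity if `s` is empty). -/
def orderedProd (T : Fin n → Module.End k Ψ) (s : Finset (Fin n)) : Module.End k Ψ :=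
  ((s.sort (· ≤ ·)).map T).prod

/-- The local monodromies `T_i := 1 - v_i u_i` of the quiver `(Ψ, Φ_i, u_i, v_i)`. -/
def quiverT (u : ∀ i, Ψ →ₗ[k] Φ i) (v : ∀ i, Φ i →ₗ[k] Ψ) (i : Fin n) : Module.End k Ψ :=
  1 - v i ∘ₗ u i

/-- The Stokes multiplier `S_β`: the block upper-unitriangular endomorphism of `⊕ᵢ Φᵢ` with
identity diagonal blocks and `(i,j)` block `u_i ∘ v_j` for `i < j`. -/
def Sbeta (u : ∀ i, Ψ →ₗ[k] Φ i) (v : ∀ i, Φ i →ₗ[k] Ψ) :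
    Module.End k (∀ i, Φ i) :=
  LinearMap.pi fun i =>
    (LinearMap.proj i : (∀ i, Φ i) →ₗ[k] Φ i) +
      ∑ j, if i < j then (u i ∘ₗ v j) ∘ₗ (LinearMap.proj j) else 0

/-- The block upper-unitriangular endomorphism of `⊕ᵢ Φᵢ` with identity diagonal blocks and
`(i,j)` block `-u_i T_{i+1} T_{i+2} ⋯ T_{j-1} v_j` for `i < j`. -/
def SbetaInv (u : ∀ i, Ψ →ₗ[k] Φ i) (v : ∀ i, Φ i →ₗ[k] Ψ) :
    Module.End k (∀ i, Φ i) :=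
  LinearMap.pi fun i =>
    (LinearMap.proj i : (∀ i, Φ i) →ₗ[k] Φ i) -
      ∑ j, if i < j then
        (u i ∘ₗ (orderedProd (quiverT u v) (Finset.Ioo i j) : Ψ →ₗ[k] Ψ) ∘ₗ v j) ∘ₗ
          (LinearMap.proj j : (∀ l, Φ l) →ₗ[k] Φ j)
      else 0


/-- The Stokes multiplier `S_{-β}`: the block lower-triangular endomorphism of `⊕ᵢ Φᵢ` with
diagonal blocks `𝕋_i = 1 - u_i v_i` and `(i,j)` block `-u_i ∘ v_j` for `i > j`. -/
def Sminus (u : ∀ i, Ψ →ₗ[k] Φ i) (v : ∀ i, Φ i →ₗ[k] Ψ) :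
    Module.End k (∀ i, Φ i) :=
  LinearMap.pi fun i =>
    ((LinearMap.id - u i ∘ₗ v i) ∘ₗ (LinearMap.proj i : (∀ l, Φ l) →ₗ[k] Φ i)) -
      ∑ j, if j < i then (u i ∘ₗ v j) ∘ₗ (LinearMap.proj j : (∀ l, Φ l) →ₗ[k] Φ j) else 0

/-- `U_i := u_i T_{i+1} T_{i+2} ⋯ T_n : Ψ → Φ_i`. -/
def Ucomp (u : ∀ i, Ψ →ₗ[k] Φ i) (v : ∀ i, Φ i →ₗ[k] Ψ) (i : Fin n) : Ψ →ₗ[k] Φ i :=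
  u i ∘ₗ (orderedProd (quiverT u v) (Finset.Ioi i) : Ψ →ₗ[k] Ψ)

/-- `U_Σ = ᵗ(U_1, …, U_n) : Ψ → ⊕ᵢ Φᵢ`. -/
def USigma (u : ∀ i, Ψ →ₗ[k] Φ i) (v : ∀ i, Φ i →ₗ[k] Ψ) : Ψ →ₗ[k] (∀ i, Φ i) :=
  LinearMap.pi fun i => Ucomp u v i

/-- `V_Σ = (v_1, …, v_n) : ⊕ᵢ Φᵢ → Ψ`. -/
def VSigma (v : ∀ i, Φ i →ₗ[k] Ψ) : (∀ i, Φ i) →ₗ[k] Ψ :=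
  ∑ i, v i ∘ₗ (LinearMap.proj i : (∀ l, Φ l) →ₗ[k] Φ i)



section Aux

set_option linter.unusedSectionVars false
set_option maxHeartbeats 1000000

variable (u : ∀ i, Ψ →ₗ[k] Φ i) (v : ∀ i, Φ i →ₗ[k] Ψ)

lemma orderedProd_empty (T : Fin n → Module.End k Ψ) : orderedProd T ∅ = 1 := by
  simp [orderedProd]

lemma orderedProd_union (T : Fin n → Module.End k Ψ) {s t : Finset (Fin n)}
    (h : ∀ a ∈ s, ∀ b ∈ t, a < b) :
    orderedProd T (s ∪ t) = orderedProd T s * orderedProd T t := by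
  induction s using Finset.induction_on_min with
  | empty => simp [orderedProd_empty]
  | insert a s ha ih =>
    have hat : ∀ b ∈ t, a < b := h a (Finset.mem_insert_self a s)
    have has : a ∉ s := fun hmem => lt_irrefl a (ha a hmem)
    have haut : a ∉ s ∪ t := by
      simp only [Finset.mem_union, not_or]
      exact ⟨has, fun hm => lt_irrefl a (hat a hm)⟩
    have hle : ∀ b ∈ s ∪ t, a ≤ b := by
      intro b hb
      rcases Finset.mem_union.1 hb with hb | hb
      · exact (ha b hb).le
      · exact (hat b hb).le
    rw [Finset.insert_union, orderedProd, Finset.sort_insert _ hle haut,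
      orderedProd, Finset.sort_insert _ (fun b hb => (ha b hb).le) has]
    simp only [List.map_cons, List.prod_cons]
    rw [← orderedProd, ← orderedProd, ih (fun x hx => h x (Finset.mem_insert_of_mem hx)),
      mul_assoc]

lemma orderedProd_insert_max (T : Fin n → Module.End k Ψ) {a : Fin n} {s : Finset (Fin n)}
    (h : ∀ b ∈ s, b < a) : orderedProd T (insert a s) = orderedProd T s * T a := by
  rw [show insert a s = s ∪ {a} by rw [Finset.insert_eq, Finset.union_comm],
    orderedProd_union T (by simpa using h)]
  simp [orderedProd]

lemma tel1 (T : Fin n → Module.End k Ψ) (s : Finset (Fin n)) :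
    ∑ l ∈ s, (1 - T l) * orderedProd T (s.filter (l < ·)) = 1 - orderedProd T s := by
  induction s using Finset.induction_on_min with
  | empty => simp [orderedProd_empty]
  | insert a s ha ih =>
    have has : a ∉ s := fun hmem => lt_irrefl a (ha a hmem)
    rw [Finset.sum_insert has]
    have h1 : (insert a s).filter (a < ·) = s := by
      ext x
      simp only [Finset.mem_filter, Finset.mem_insert]
      constructor
      · rintro ⟨hx | hx, hax⟩
        · exact absurd hax (by simp [hx])
        · exact hx
      · exact fun hx => ⟨Or.inr hx, ha x hx⟩
    have h2 : ∀ l ∈ s, (insert a s).filter (l < ·) = s.filter (l < ·) := by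
      intro l hl
      ext x
      simp only [Finset.mem_filter, Finset.mem_insert]
      constructor
      · rintro ⟨hx | hx, hlx⟩
        · exact absurd (hx ▸ hlx) (not_lt.2 (ha l hl).le)
        · exact ⟨hx, hlx⟩
      · exact fun ⟨hx, hlx⟩ => ⟨Or.inr hx, hlx⟩
    rw [h1, Finset.sum_congr rfl (fun l hl => by rw [h2 l hl]), ih]
    have h3 : orderedProd T (insert a s) = T a * orderedProd T s := by
      rw [orderedProd, Finset.sort_insert _ (fun b hb => (ha b hb).le) has]
      simp [orderedProd]
    rw [h3]; noncomm_ring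

lemma tel2 (T : Fin n → Module.End k Ψ) (s : Finset (Fin n)) :
    ∑ l ∈ s, orderedProd T (s.filter (· < l)) * (1 - T l) = 1 - orderedProd T s := by
  induction s using Finset.induction_on_max with
  | empty => simp [orderedProd_empty]
  | insert a s ha ih =>
    have has : a ∉ s := fun hmem => lt_irrefl a (ha a hmem)
    rw [Finset.sum_insert has]
    have h1 : (insert a s).filter (· < a) = s := by
      ext x
      simp only [Finset.mem_filter, Finset.mem_insert]
      constructor
      · rintro ⟨hx | hx, hax⟩
        · exact absurd hax (by simp [hx])
        · exact hx
      · exact fun hx => ⟨Or.inr hx, ha x hx⟩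
    have h2 : ∀ l ∈ s, (insert a s).filter (· < l) = s.filter (· < l) := by
      intro l hl
      ext x
      simp only [Finset.mem_filter, Finset.mem_insert]
      constructor
      · rintro ⟨hx | hx, hlx⟩
        · exact absurd (hx ▸ hlx) (not_lt.2 (ha l hl).le)
        · exact ⟨hx, hlx⟩
      · exact fun ⟨hx, hlx⟩ => ⟨Or.inr hx, hlx⟩
    rw [h1, Finset.sum_congr rfl (fun l hl => by rw [h2 l hl]), ih,
      orderedProd_insert_max T ha]
    noncomm_ring

/-- Kronecker delta block. -/
def blockDelta (i j : Fin n) : Φ j →ₗ[k] Φ i :=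
  (LinearMap.proj i) ∘ₗ (LinearMap.single k Φ j)

lemma blockDelta_apply (i j : Fin n) (x : Φ j) :
    blockDelta (k := k) (Φ := Φ) i j x = Pi.single j x i := rfl

/-- The endomorphism of `∀ i, Φ i` with blocks `M i j`. -/
def blockMap (M : ∀ i j, Φ j →ₗ[k] Φ i) : Module.End k (∀ i, Φ i) :=
  LinearMap.pi fun i => ∑ j, M i j ∘ₗ (LinearMap.proj j : (∀ l, Φ l) →ₗ[k] Φ j)

lemma blockMap_apply (M : ∀ i j, Φ j →ₗ[k] Φ i) (x : ∀ i, Φ i) (i : Fin n) :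
    blockMap M x i = ∑ j, M i j (x j) := by
  simp [blockMap, LinearMap.pi_apply, LinearMap.sum_apply]

lemma blockMap_mul (M N : ∀ i j, Φ j →ₗ[k] Φ i) :
    blockMap M * blockMap N = blockMap (fun i j => ∑ l, M i l ∘ₗ N l j) := by
  apply LinearMap.ext; intro x
  funext i
  rw [Module.End.mul_apply, blockMap_apply, blockMap_apply]
  simp only [LinearMap.sum_apply, LinearMap.comp_apply, blockMap_apply, map_sum]
  exact Finset.sum_comm

lemma blockMap_delta : blockMap (fun i j => blockDelta (k := k) (Φ := Φ) i j) = 1 := by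
  apply LinearMap.ext; intro x
  funext i
  rw [blockMap_apply]
  simp only [blockDelta_apply]
  rw [Fintype.sum_pi_single]
  rfl

lemma sum_delta_comp {j : Fin n} (F : ∀ l, Φ j →ₗ[k] Φ l) (i : Fin n) :
    ∑ l, blockDelta (k := k) (Φ := Φ) i l ∘ₗ F l = F i := by
  apply LinearMap.ext; intro x
  simp only [LinearMap.sum_apply, LinearMap.comp_apply, blockDelta_apply]
  rw [Fintype.sum_pi_single]

lemma sum_comp_delta {i : Fin n} (G : ∀ l, Φ l →ₗ[k] Φ i) (j : Fin n) :
    ∑ l, G l ∘ₗ blockDelta (k := k) (Φ := Φ) l j = G j := by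
  apply LinearMap.ext; intro x
  simp only [LinearMap.sum_apply, LinearMap.comp_apply, blockDelta_apply]
  rw [Fintype.sum_eq_single j]
  · simp
  · intro l hl
    rw [Pi.single_eq_of_ne hl, map_zero]

/-- Blocks of `Sbeta`. -/
def Bm (i j : Fin n) : Φ j →ₗ[k] Φ i :=
  blockDelta i j + if i < j then u i ∘ₗ v j else 0

/-- Blocks of `SbetaInv`. -/
def Cm (i j : Fin n) : Φ j →ₗ[k] Φ i :=
  blockDelta i j -
    if i < j then
      u i ∘ₗ (orderedProd (quiverT u v) (Finset.Ioo i j) : Ψ →ₗ[k] Ψ) ∘ₗ v j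
    else 0

/-- Blocks of `Sminus`. -/
def Dm (i j : Fin n) : Φ j →ₗ[k] Φ i :=
  blockDelta i j - if j ≤ i then u i ∘ₗ v j else 0

/-- Blocks of `1 - USigma ∘ VSigma`. -/
def Em (i j : Fin n) : Φ j →ₗ[k] Φ i :=
  blockDelta i j - Ucomp u v i ∘ₗ v j

lemma Sbeta_eq : Sbeta u v = blockMap (Bm u v) := by
  apply LinearMap.ext; intro x
  funext i
  rw [blockMap_apply]
  simp only [Sbeta, LinearMap.pi_apply, LinearMap.add_apply, LinearMap.sum_apply, Bm,
    LinearMap.comp_apply, LinearMap.proj_apply]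
  rw [Finset.sum_add_distrib]
  congr 1
  · rw [show (∑ j, blockDelta (k := k) (Φ := Φ) i j (x j)) = ∑ j, Pi.single j (x j) i from
      rfl, Fintype.sum_pi_single]
  · apply Finset.sum_congr rfl
    intro j _
    by_cases h : i < j <;> simp [h]

lemma SbetaInv_eq : SbetaInv u v = blockMap (Cm u v) := by
  apply LinearMap.ext; intro x
  funext i
  rw [blockMap_apply]
  simp only [SbetaInv, LinearMap.pi_apply, LinearMap.sub_apply, LinearMap.sum_apply, Cm,
    LinearMap.comp_apply, LinearMap.proj_apply]
  rw [Finset.sum_sub_distrib]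
  congr 1
  · rw [show (∑ j, blockDelta (k := k) (Φ := Φ) i j (x j)) = ∑ j, Pi.single j (x j) i from
      rfl, Fintype.sum_pi_single]
  · apply Finset.sum_congr rfl
    intro j _
    by_cases h : i < j <;> simp [h]

lemma Sminus_eq : Sminus u v = blockMap (Dm u v) := by
  apply LinearMap.ext; intro x
  funext i
  rw [blockMap_apply]
  simp only [Sminus, LinearMap.pi_apply, LinearMap.sub_apply, LinearMap.sum_apply, Dm,
    LinearMap.comp_apply, LinearMap.proj_apply, LinearMap.id_coe, id_eq]
  rw [Finset.sum_sub_distrib]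
  have hd : (∑ j, blockDelta (k := k) (Φ := Φ) i j (x j)) = x i := by
    rw [show (∑ j, blockDelta (k := k) (Φ := Φ) i j (x j)) = ∑ j, Pi.single j (x j) i from
      rfl, Fintype.sum_pi_single]
  rw [hd]
  have key : ∀ j : Fin n, (if j ≤ i then (u i ∘ₗ v j) else 0) (x j) =
      (if j = i then (u i) ((v j) (x j)) else 0) +
        (if j < i then (u i) ((v j) (x j)) else 0) := by
    intro j
    rcases lt_trichotomy j i with h | h | h
    · simp [h.le, h, h.ne]
    · subst h; simp
    · simp [h.not_gt, h.ne', not_le.2 h]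
  rw [Finset.sum_congr rfl (fun j _ => key j), Finset.sum_add_distrib,
    Finset.sum_ite_eq' Finset.univ i (fun j => (u i) ((v j) (x j))),
    if_pos (Finset.mem_univ i)]
  have hpush : ∀ d : Fin n, ((if d < i then (u i ∘ₗ v d) ∘ₗ
      (LinearMap.proj d : (∀ l, Φ l) →ₗ[k] Φ d) else 0) : (∀ l, Φ l) →ₗ[k] Φ i) x
      = if d < i then (u i) ((v d) (x d)) else 0 := by
    intro d
    by_cases h : d < i <;> simp [h]
  simp only [hpush]
  abel

lemma oneSubUV_eq : (1 : Module.End k (∀ i, Φ i)) - USigma u v ∘ₗ VSigma v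
    = blockMap (Em u v) := by
  apply LinearMap.ext; intro x
  funext i
  rw [blockMap_apply]
  simp only [LinearMap.sub_apply, Module.End.one_apply, LinearMap.comp_apply, USigma, VSigma,
    LinearMap.pi_apply, LinearMap.sum_apply, LinearMap.proj_apply, Em, Pi.sub_apply]
  rw [Finset.sum_sub_distrib]
  have hd : (∑ j, blockDelta (k := k) (Φ := Φ) i j (x j)) = x i := by
    rw [show (∑ j, blockDelta (k := k) (Φ := Φ) i j (x j)) = ∑ j, Pi.single j (x j) i from
      rfl, Fintype.sum_pi_single]
  rw [hd, map_sum]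

lemma collapse_right (E : Module.End k Ψ) (i l j : Fin n) :
    (u i ∘ₗ (E : Ψ →ₗ[k] Ψ) ∘ₗ v l) ∘ₗ (u l ∘ₗ v j)
      = u i ∘ₗ ((E * (1 - quiverT u v l) : Module.End k Ψ) : Ψ →ₗ[k] Ψ) ∘ₗ v j := by
  apply LinearMap.ext; intro x
  simp [quiverT, Module.End.mul_apply, LinearMap.sub_apply, map_sub]

lemma collapse_left (E : Module.End k Ψ) (i l j : Fin n) :
    u i ∘ₗ v l ∘ₗ u l ∘ₗ (E : Ψ →ₗ[k] Ψ) ∘ₗ v j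
      = u i ∘ₗ (((1 - quiverT u v l) * E : Module.End k Ψ) : Ψ →ₗ[k] Ψ) ∘ₗ v j := by
  apply LinearMap.ext; intro x
  simp [quiverT, Module.End.mul_apply, LinearMap.sub_apply, map_sub]

lemma sandwich_sum (i j : Fin n) (s : Finset (Fin n)) (E : Fin n → Module.End k Ψ) :
    ∑ l ∈ s, u i ∘ₗ ((E l : Module.End k Ψ) : Ψ →ₗ[k] Ψ) ∘ₗ v j
      = u i ∘ₗ ((∑ l ∈ s, E l : Module.End k Ψ) : Ψ →ₗ[k] Ψ) ∘ₗ v j := by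
  apply LinearMap.ext; intro x
  simp [LinearMap.sum_apply, map_sum]

lemma sandwich_one_sub (i j : Fin n) (E : Module.End k Ψ) :
    u i ∘ₗ ((1 - E : Module.End k Ψ) : Ψ →ₗ[k] Ψ) ∘ₗ v j
      = u i ∘ₗ v j - u i ∘ₗ (E : Ψ →ₗ[k] Ψ) ∘ₗ v j := by
  apply LinearMap.ext; intro x
  simp [LinearMap.sub_apply, map_sub]

lemma filter_univ_Ioo (i j : Fin n) :
    Finset.univ.filter (fun l => i < l ∧ l < j) = Finset.Ioo i j := by
  ext x; simp [Finset.mem_Ioo]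

lemma filter_univ_Ioi (i : Fin n) :
    Finset.univ.filter (fun l => i < l) = Finset.Ioi i := by
  ext x; simp [Finset.mem_Ioi]

lemma filter_Ioo_left {i j l : Fin n} (hl : l ∈ Finset.Ioo i j) :
    (Finset.Ioo i j).filter (· < l) = Finset.Ioo i l := by
  rw [Finset.mem_Ioo] at hl
  ext x
  simp only [Finset.mem_filter, Finset.mem_Ioo]
  exact ⟨fun ⟨⟨h1, _⟩, h3⟩ => ⟨h1, h3⟩, fun ⟨h1, h3⟩ => ⟨⟨h1, h3.trans hl.2⟩, h3⟩⟩

lemma filter_Ioo_right {i j l : Fin n} (hl : l ∈ Finset.Ioo i j) :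
    (Finset.Ioo i j).filter (l < ·) = Finset.Ioo l j := by
  rw [Finset.mem_Ioo] at hl
  ext x
  simp only [Finset.mem_filter, Finset.mem_Ioo]
  exact ⟨fun ⟨⟨_, h2⟩, h3⟩ => ⟨h3, h2⟩, fun ⟨h3, h2⟩ => ⟨⟨hl.1.trans h3, h2⟩, h3⟩⟩

lemma filter_Ioi {i l : Fin n} (hl : l ∈ Finset.Ioi i) :
    (Finset.Ioi i).filter (l < ·) = Finset.Ioi l := by
  rw [Finset.mem_Ioi] at hl
  ext x
  simp only [Finset.mem_filter, Finset.mem_Ioi]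
  exact ⟨fun ⟨_, h3⟩ => h3, fun h3 => ⟨hl.trans h3, h3⟩⟩

lemma entry_CB (i j : Fin n) :
    ∑ l, Cm u v i l ∘ₗ Bm u v l j = blockDelta (k := k) (Φ := Φ) i j := by
  have key : ∀ l, Cm u v i l ∘ₗ Bm u v l j =
      (blockDelta i l ∘ₗ blockDelta l j
        + blockDelta i l ∘ₗ (if l < j then u l ∘ₗ v j else 0))
      - ((if i < l then
            u i ∘ₗ (orderedProd (quiverT u v) (Finset.Ioo i l) : Ψ →ₗ[k] Ψ) ∘ₗ v l
          else 0) ∘ₗ blockDelta l j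
        + (if i < l ∧ l < j then
            u i ∘ₗ ((orderedProd (quiverT u v) (Finset.Ioo i l) * (1 - quiverT u v l) :
              Module.End k Ψ) : Ψ →ₗ[k] Ψ) ∘ₗ v j
          else 0)) := by
    intro l
    have hC : (if i < l then
          u i ∘ₗ (orderedProd (quiverT u v) (Finset.Ioo i l) : Ψ →ₗ[k] Ψ) ∘ₗ v l else 0) ∘ₗ
        (if l < j then u l ∘ₗ v j else 0)
        = if i < l ∧ l < j then
            u i ∘ₗ ((orderedProd (quiverT u v) (Finset.Ioo i l) * (1 - quiverT u v l) :
              Module.End k Ψ) : Ψ →ₗ[k] Ψ) ∘ₗ v j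
          else 0 := by
      by_cases h1 : i < l <;> by_cases h2 : l < j <;>
        simp [h1, h2, collapse_right]
    simp only [Cm, Bm, LinearMap.sub_comp, LinearMap.comp_add, hC]
    try abel
  rw [Finset.sum_congr rfl (fun l _ => key l), Finset.sum_sub_distrib,
    Finset.sum_add_distrib, Finset.sum_add_distrib,
    sum_delta_comp (fun l => blockDelta l j) i,
    sum_delta_comp (fun l => if l < j then u l ∘ₗ v j else 0) i,
    sum_comp_delta (fun l => if i < l then
      u i ∘ₗ (orderedProd (quiverT u v) (Finset.Ioo i l) : Ψ →ₗ[k] Ψ) ∘ₗ v l else 0) j]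
  have hsum : ∑ l, (if i < l ∧ l < j then
        u i ∘ₗ ((orderedProd (quiverT u v) (Finset.Ioo i l) * (1 - quiverT u v l) :
          Module.End k Ψ) : Ψ →ₗ[k] Ψ) ∘ₗ v j else 0)
      = u i ∘ₗ (((1 : Module.End k Ψ) - orderedProd (quiverT u v) (Finset.Ioo i j)) :
          Ψ →ₗ[k] Ψ) ∘ₗ v j := by
    rw [← Finset.sum_filter, filter_univ_Ioo,
      Finset.sum_congr rfl (fun l hl => by rw [← filter_Ioo_left hl]),
      sandwich_sum, tel2]
  rw [hsum]
  by_cases h : i < j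
  · rw [if_pos h, if_pos h, sandwich_one_sub]
    abel
  · rw [if_neg h, if_neg h, Finset.Ioo_eq_empty h, orderedProd_empty, sub_self]
    have : u i ∘ₗ ((0 : Module.End k Ψ) : Ψ →ₗ[k] Ψ) ∘ₗ v j = 0 := by
      apply LinearMap.ext; intro x; simp
    rw [this]
    abel

lemma entry_BC (i j : Fin n) :
    ∑ l, Bm u v i l ∘ₗ Cm u v l j = blockDelta (k := k) (Φ := Φ) i j := by
  have key : ∀ l, Bm u v i l ∘ₗ Cm u v l j =
      (blockDelta i l ∘ₗ blockDelta l j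
        + (if i < l then u i ∘ₗ v l else 0) ∘ₗ blockDelta l j)
      - (blockDelta i l ∘ₗ (if l < j then
            u l ∘ₗ (orderedProd (quiverT u v) (Finset.Ioo l j) : Ψ →ₗ[k] Ψ) ∘ₗ v j
          else 0)
        + (if i < l ∧ l < j then
            u i ∘ₗ (((1 - quiverT u v l) * orderedProd (quiverT u v) (Finset.Ioo l j) :
              Module.End k Ψ) : Ψ →ₗ[k] Ψ) ∘ₗ v j
          else 0)) := by
    intro l
    have hC : (if i < l then u i ∘ₗ v l else 0) ∘ₗ
        (if l < j then
          u l ∘ₗ (orderedProd (quiverT u v) (Finset.Ioo l j) : Ψ →ₗ[k] Ψ) ∘ₗ v j else 0)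
        = if i < l ∧ l < j then
            u i ∘ₗ (((1 - quiverT u v l) * orderedProd (quiverT u v) (Finset.Ioo l j) :
              Module.End k Ψ) : Ψ →ₗ[k] Ψ) ∘ₗ v j
          else 0 := by
      by_cases h1 : i < l <;> by_cases h2 : l < j <;> simp [h1, h2]
      all_goals
        apply LinearMap.ext; intro x
        simp [quiverT, Module.End.mul_apply, map_sub]
    simp only [Bm, Cm, LinearMap.add_comp, LinearMap.comp_sub, hC]
    try abel
  rw [Finset.sum_congr rfl (fun l _ => key l), Finset.sum_sub_distrib,
    Finset.sum_add_distrib, Finset.sum_add_distrib,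
    sum_delta_comp (fun l => blockDelta l j) i,
    sum_comp_delta (fun l => if i < l then u i ∘ₗ v l else 0) j,
    sum_delta_comp (fun l => if l < j then
      u l ∘ₗ (orderedProd (quiverT u v) (Finset.Ioo l j) : Ψ →ₗ[k] Ψ) ∘ₗ v j else 0) i]
  have hsum : ∑ l, (if i < l ∧ l < j then
        u i ∘ₗ (((1 - quiverT u v l) * orderedProd (quiverT u v) (Finset.Ioo l j) :
          Module.End k Ψ) : Ψ →ₗ[k] Ψ) ∘ₗ v j else 0)
      = u i ∘ₗ (((1 : Module.End k Ψ) - orderedProd (quiverT u v) (Finset.Ioo i j)) :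
          Ψ →ₗ[k] Ψ) ∘ₗ v j := by
    rw [← Finset.sum_filter, filter_univ_Ioo,
      Finset.sum_congr rfl (fun l hl => by rw [← filter_Ioo_right hl]),
      sandwich_sum, tel1]
  rw [hsum]
  by_cases h : i < j
  · rw [if_pos h, if_pos h, sandwich_one_sub]
    abel
  · rw [if_neg h, if_neg h, Finset.Ioo_eq_empty h, orderedProd_empty, sub_self]
    have : u i ∘ₗ ((0 : Module.End k Ψ) : Ψ →ₗ[k] Ψ) ∘ₗ v j = 0 := by
      apply LinearMap.ext; intro x; simp
    rw [this]
    abel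

lemma entry_BE (i j : Fin n) :
    ∑ l, Bm u v i l ∘ₗ Em u v l j = Dm u v i j := by
  have key : ∀ l, Bm u v i l ∘ₗ Em u v l j =
      (blockDelta i l ∘ₗ blockDelta l j
        + (if i < l then u i ∘ₗ v l else 0) ∘ₗ blockDelta l j)
      - (blockDelta i l ∘ₗ (Ucomp u v l ∘ₗ v j)
        + (if i < l then
            u i ∘ₗ (((1 - quiverT u v l) * orderedProd (quiverT u v) (Finset.Ioi l) :
              Module.End k Ψ) : Ψ →ₗ[k] Ψ) ∘ₗ v j
          else 0)) := by
    intro l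
    have hC : (if i < l then u i ∘ₗ v l else 0) ∘ₗ (Ucomp u v l ∘ₗ v j)
        = if i < l then
            u i ∘ₗ (((1 - quiverT u v l) * orderedProd (quiverT u v) (Finset.Ioi l) :
              Module.End k Ψ) : Ψ →ₗ[k] Ψ) ∘ₗ v j
          else 0 := by
      by_cases h1 : i < l <;> simp [h1, Ucomp]
      all_goals
        apply LinearMap.ext; intro x
        simp [quiverT, Module.End.mul_apply, map_sub]
    simp only [Bm, Em, LinearMap.add_comp, LinearMap.comp_sub, hC]
    try abel
  rw [Finset.sum_congr rfl (fun l _ => key l), Finset.sum_sub_distrib,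
    Finset.sum_add_distrib, Finset.sum_add_distrib,
    sum_delta_comp (fun l => blockDelta l j) i,
    sum_comp_delta (fun l => if i < l then u i ∘ₗ v l else 0) j,
    sum_delta_comp (fun l => Ucomp u v l ∘ₗ v j) i]
  have hsum : ∑ l, (if i < l then
        u i ∘ₗ (((1 - quiverT u v l) * orderedProd (quiverT u v) (Finset.Ioi l) :
          Module.End k Ψ) : Ψ →ₗ[k] Ψ) ∘ₗ v j else 0)
      = u i ∘ₗ (((1 : Module.End k Ψ) - orderedProd (quiverT u v) (Finset.Ioi i)) :
          Ψ →ₗ[k] Ψ) ∘ₗ v j := by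
    rw [← Finset.sum_filter, filter_univ_Ioi,
      Finset.sum_congr rfl (fun l hl => by rw [← filter_Ioi hl]),
      sandwich_sum, tel1]
  rw [hsum, sandwich_one_sub]
  have hU : Ucomp u v i ∘ₗ v j
      = u i ∘ₗ (orderedProd (quiverT u v) (Finset.Ioi i) : Ψ →ₗ[k] Ψ) ∘ₗ v j := by
    rw [Ucomp, LinearMap.comp_assoc]
  rw [hU, Dm]
  by_cases h : i < j
  · rw [if_pos h, if_neg (not_le.2 h)]
    abel
  · rw [if_neg h, if_pos (not_lt.1 h)]
    abel

end Aux


/-- `S_β` is invertible and `S_β⁻¹ ⬝ S_{-β} = 1 - U_Σ V_Σ`, the monodromy of `⊕ᵢ Φᵢ`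
around `∞`. -/
theorem stmt_2 (u : ∀ i, Ψ →ₗ[k] Φ i) (v : ∀ i, Φ i →ₗ[k] Ψ) :
    IsUnit (Sbeta u v) ∧
      Ring.inverse (Sbeta u v) * Sminus u v =
        1 - USigma u v ∘ₗ VSigma v := by
  have hBC : Sbeta u v * SbetaInv u v = 1 := by
    rw [Sbeta_eq, SbetaInv_eq, blockMap_mul, ← blockMap_delta]
    congr 1
    funext i j
    exact entry_BC u v i j
  have hCB : SbetaInv u v * Sbeta u v = 1 := by
    rw [Sbeta_eq, SbetaInv_eq, blockMap_mul, ← blockMap_delta]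
    congr 1
    funext i j
    exact entry_CB u v i j
  have hunit : IsUnit (Sbeta u v) := ⟨⟨Sbeta u v, SbetaInv u v, hBC, hCB⟩, rfl⟩
  refine ⟨hunit, ?_⟩
  have hBE : Sbeta u v * ((1 : Module.End k (∀ i, Φ i)) - USigma u v ∘ₗ VSigma v)
      = Sminus u v := by
    rw [oneSubUV_eq, Sbeta_eq, blockMap_mul, Sminus_eq]
    congr 1
    funext i j
    exact entry_BE u v i j
  rw [← hBE, ← mul_assoc, Ring.inverse_mul_cancel _ hunit, one_mul]
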